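/- Suppose m < n < q, λ > 0 and γ < 0, and set ν = (n−m)/(q(s−1)) and U_c = (λ/|γ|)^{1/(s−1)}. Then the zero solution is polynomially stable: there exist δ > 0, t1 ≥ t0 and K > 0 such that every admissible solution with v(t1) ≤ δ satisfies v(t) ≤ K·t^{−ν} for all t ≥ t1; moreover, there exists δ' > 0 such that every admissible solution with |t1^{ν}·v(t1) − U_c| ≤ δ' satisfies t^{ν}·v(t) → U_c as t → ∞. -/

import Mathlib

/-- An admissible solution of the reduced equation
`v'(t) = γ·t^{−m/q}·v(t)^s + λ·t^{−n/q}·v(t) + ρ(t)` on `[t0,∞)` with values in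
`[0,d0]`, where `|ρ(t)| ≤ M·(t^{−m/q}·v(t)^s + t^{−n/q}·v(t))·(v(t) + t^{−1/q})`. -/
def IsAdmissible (q m n s : ℕ) (γ lam d0 t0 M : ℝ) (v : ℝ → ℝ) : Prop :=
  (∀ t ≥ t0, v t ∈ Set.Icc (0:ℝ) d0) ∧
  ∃ ρ : ℝ → ℝ,
    (∀ t ≥ t0, |ρ t| ≤
      M * (t ^ (-(m:ℝ)/(q:ℝ)) * v t ^ s + t ^ (-(n:ℝ)/(q:ℝ)) * v t)
        * (v t + t ^ (-(1:ℝ)/(q:ℝ)))) ∧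
    (∀ t ≥ t0, HasDerivAt v
      (γ * t ^ (-(m:ℝ)/(q:ℝ)) * v t ^ s + lam * t ^ (-(n:ℝ)/(q:ℝ)) * v t + ρ t) t)


open Set Filter

lemma barrier_upper {w D : ℝ → ℝ} {T K : ℝ}
    (hderiv : ∀ t ≥ T, HasDerivAt w (D t) t)
    (hT : w T ≤ K)
    (hbar : ∀ t ≥ T, w t = K → D t < 0) :
    ∀ t ≥ T, w t ≤ K := by
  intro t2 ht2
  by_contra hgt
  push_neg at hgt
  have hcont : ContinuousOn w (Set.Icc T t2) := fun x hx =>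
    ((hderiv x hx.1).continuousAt).continuousWithinAt
  set S := {t | t ∈ Set.Icc T t2 ∧ w t ≤ K} with hSdef
  have hSeq : S = Set.Icc T t2 ∩ w ⁻¹' Set.Iic K := by
    ext x; simp [hSdef, Set.mem_Icc, and_assoc]
  have hTS : T ∈ S := ⟨⟨le_rfl, ht2⟩, hT⟩
  have hne : S.Nonempty := ⟨T, hTS⟩
  have hbdd : BddAbove S := ⟨t2, fun x hx => hx.1.2⟩
  have hclosed : IsClosed S := by
    rw [hSeq]
    exact ContinuousOn.preimage_isClosed_of_isClosed hcont isClosed_Icc isClosed_Iic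
  set τ := sSup S with hτdef
  have hτS : τ ∈ S := hclosed.csSup_mem hne hbdd
  have hτT : T ≤ τ := hτS.1.1
  have hτK : w τ ≤ K := hτS.2
  have hτne : τ ≠ t2 := fun h => absurd hτK (by rw [h]; exact not_le.mpr hgt)
  have hτlt : τ < t2 := lt_of_le_of_ne hτS.1.2 hτne
  have hIoc : ∀ t ∈ Set.Ioc τ t2, K < w t := by
    intro t ht
    by_contra hle
    push_neg at hle
    have : t ∈ S := ⟨⟨le_trans hτT ht.1.le, ht.2⟩, hle⟩
    exact absurd (le_csSup hbdd this) (not_le.mpr ht.1)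
  have hwτK : w τ = K := by
    refine le_antisymm hτK ?_
    have htd : Filter.Tendsto w (nhdsWithin τ (Set.Ioi τ)) (nhds (w τ)) :=
      ((hderiv τ hτT).continuousAt).continuousWithinAt
    have hev : ∀ᶠ t in nhdsWithin τ (Set.Ioi τ), K ≤ w t := by
      filter_upwards [Ioc_mem_nhdsGT_of_mem ⟨le_rfl, hτlt⟩] with t ht
      exact (hIoc t ht).le
    exact ge_of_tendsto htd hev
  have hDτ : D τ < 0 := hbar τ hτT hwτK
  have hslope : Filter.Tendsto (slope w τ) (nhdsWithin τ (Set.Ioi τ)) (nhds (D τ)) := by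
    have h := ((hderiv τ hτT).hasDerivWithinAt (s := Set.Ioi τ))
    rw [hasDerivWithinAt_iff_tendsto_slope] at h
    rwa [Set.diff_singleton_eq_self (Set.notMem_Ioi.mpr le_rfl)] at h
  have hge : 0 ≤ D τ := by
    refine ge_of_tendsto hslope ?_
    filter_upwards [Ioc_mem_nhdsGT_of_mem ⟨le_rfl, hτlt⟩] with t ht
    have h1 : 0 < t - τ := by linarith [ht.1]
    have h2 : 0 ≤ w t - w τ := by rw [hwτK]; linarith [hIoc t ht]
    rw [slope_def_field]
    exact div_nonneg h2 h1.le
  linarith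

lemma barrier_lower {w D : ℝ → ℝ} {T K : ℝ}
    (hderiv : ∀ t ≥ T, HasDerivAt w (D t) t)
    (hT : K ≤ w T)
    (hbar : ∀ t ≥ T, w t = K → 0 < D t) :
    ∀ t ≥ T, K ≤ w t := by
  have h := barrier_upper (w := fun t => -w t) (D := fun t => -D t) (T := T) (K := -K)
    (fun t ht => (hderiv t ht).neg) (by simpa using hT)
    (fun t ht he => by
      have : w t = K := by simpa using neg_injective (by simpa using he)
      simpa using hbar t ht this)
  intro t ht
  have := h t ht
  simpa using this


lemma escape {w D : ℝ → ℝ} {T c β L : ℝ} (hβ : β < 1) (hc : 0 < c) (hT : 0 < T)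
    (hderiv : ∀ t ≥ T, HasDerivAt w (D t) t)
    (hD : ∀ t ≥ T, D t ≤ -(c * t ^ (-β)))
    (hL : ∀ t ≥ T, L ≤ w t) : False := by
  have h1β : (0:ℝ) < 1 - β := by linarith
  set φ : ℝ → ℝ := fun t => c / (1 - β) * t ^ (1 - β) with hφdef
  have hφd : ∀ t > (0:ℝ), HasDerivAt φ (c * t ^ (-β)) t := by
    intro t ht
    have h := (Real.hasDerivAt_rpow_const (x := t) (p := 1 - β) (Or.inl ht.ne')).const_mul
      (c / (1 - β))
    refine h.congr_deriv ?_
    have : (1:ℝ) - β - 1 = -β := by ring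
    rw [this]
    field_simp
  set h : ℝ → ℝ := fun t => w t + φ t with hhdef
  have hhd : ∀ t ≥ T, HasDerivAt h (D t + c * t ^ (-β)) t := fun t ht =>
    (hderiv t ht).add (hφd t (lt_of_lt_of_le hT ht))
  have hanti : AntitoneOn h (Set.Ici T) := by
    refine antitoneOn_of_deriv_nonpos (convex_Ici T) ?_ ?_ ?_
    · exact fun x hx => ((hhd x hx).continuousAt).continuousWithinAt
    · intro x hx
      rw [interior_Ici] at hx
      exact ((hhd x hx.le).differentiableAt).differentiableWithinAt
    · intro x hx
      rw [interior_Ici] at hx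
      rw [(hhd x hx.le).deriv]
      have := hD x hx.le
      linarith
  have hφtop : Filter.Tendsto φ Filter.atTop Filter.atTop := by
    apply Filter.Tendsto.const_mul_atTop (by positivity)
    exact tendsto_rpow_atTop h1β
  obtain ⟨t, htT, htφ⟩ : ∃ t, T ≤ t ∧ w T + φ T - L < φ t := by
    have := (hφtop.eventually_gt_atTop (w T + φ T - L)).and (Filter.eventually_ge_atTop T)
    obtain ⟨t, h1, h2⟩ := this.exists
    exact ⟨t, h2, h1⟩
  have := hanti (Set.mem_Ici.mpr le_rfl) (Set.mem_Ici.mpr htT) htT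
  have hLt := hL t htT
  simp only [hhdef] at this
  linarith

lemma key_estimate (q m n s : ℕ) (γ lam M ν K C θ : ℝ)
    (hq : 0 < q) (hν : 0 < ν)
    (hrel : ν * ((s:ℝ) - 1) = ((n:ℝ) - (m:ℝ)) / (q:ℝ))
    (hθν : θ ≤ ν) (hθ1 : θ ≤ 1 - (n:ℝ)/(q:ℝ)) (hθq : θ ≤ 1/(q:ℝ))
    (hM : 0 < M) (hK : 0 < K)
    (hC : C = ν*K + M*((K:ℝ)^s + K)*(K+1))
    (v ρ : ℝ → ℝ) (t : ℝ) (ht1 : 1 ≤ t) (hv0 : 0 ≤ v t)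
    (hρ : |ρ t| ≤ M * (t ^ (-(m:ℝ)/(q:ℝ)) * v t ^ s + t ^ (-(n:ℝ)/(q:ℝ)) * v t)
        * (v t + t ^ (-(1:ℝ)/(q:ℝ))))
    (hw : t^ν * v t ≤ K) :
    |(ν * t^(ν-1) * v t
        + t^ν * (γ * t ^ (-(m:ℝ)/(q:ℝ)) * v t ^ s + lam * t ^ (-(n:ℝ)/(q:ℝ)) * v t + ρ t))
      - t ^ (-(n:ℝ)/(q:ℝ)) * (γ * (t^ν * v t)^s + lam * (t^ν * v t))|
      ≤ t ^ (-(n:ℝ)/(q:ℝ)) * (C * t^(-θ)) := by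
  have ht : (0:ℝ) < t := lt_of_lt_of_le one_pos ht1
  set w : ℝ := t^ν * v t with hwdef
  have hw0 : 0 ≤ w := mul_nonneg (Real.rpow_nonneg ht.le ν) hv0
  -- identity I1
  have hI1 : t^ν * (t ^ (-(m:ℝ)/(q:ℝ)) * v t ^ s) = t ^ (-(n:ℝ)/(q:ℝ)) * w^s := by
    rw [hwdef, mul_pow, ← Real.rpow_natCast (t^ν) s, ← Real.rpow_mul ht.le,
      ← mul_assoc, ← mul_assoc, ← Real.rpow_add ht, ← Real.rpow_add ht]
    congr 2
    have hq0 : (q:ℝ) ≠ 0 := Nat.cast_ne_zero.mpr hq.ne'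
    field_simp at hrel ⊢
    linarith
  have hI2 : t^ν * (t ^ (-(n:ℝ)/(q:ℝ)) * v t) = t ^ (-(n:ℝ)/(q:ℝ)) * w := by
    rw [hwdef]; ring
  have heq : (ν * t^(ν-1) * v t
        + t^ν * (γ * t ^ (-(m:ℝ)/(q:ℝ)) * v t ^ s + lam * t ^ (-(n:ℝ)/(q:ℝ)) * v t + ρ t))
      - t ^ (-(n:ℝ)/(q:ℝ)) * (γ * w^s + lam * w)
      = ν * t^(ν-1) * v t + t^ν * ρ t := by
    linear_combination γ * hI1 + lam * hI2
  rw [heq]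
  -- bound the two remainder pieces
  have hνt : 0 ≤ ν * t^(ν-1) * v t := by positivity
  have habs : |ν * t^(ν-1) * v t + t^ν * ρ t| ≤ ν * t^(ν-1) * v t + t^ν * |ρ t| := by
    calc |ν * t^(ν-1) * v t + t^ν * ρ t| ≤ |ν * t^(ν-1) * v t| + |t^ν * ρ t| := abs_add_le _ _
    _ = ν * t^(ν-1) * v t + t^ν * |ρ t| := by
        rw [abs_of_nonneg hνt, abs_mul, abs_of_nonneg (Real.rpow_nonneg ht.le ν)]
  refine le_trans habs ?_
  have hmono : ∀ a b : ℝ, a ≤ b → t ^ a ≤ t ^ b := fun a b hab =>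
    Real.rpow_le_rpow_of_exponent_le ht1 hab
  have htθ : (0:ℝ) < t ^ (-θ) := Real.rpow_pos_of_pos ht _
  have htβ : (0:ℝ) < t ^ (-(n:ℝ)/(q:ℝ)) := Real.rpow_pos_of_pos ht _
  -- term 1
  have hterm1 : ν * t^(ν-1) * v t ≤ t ^ (-(n:ℝ)/(q:ℝ)) * (t^(-θ) * (ν * K)) := by
    have e : t^(ν-1) * v t = (t ^ (-(n:ℝ)/(q:ℝ)) * t ^ ((n:ℝ)/(q:ℝ) - 1)) * w := by
      rw [hwdef, ← Real.rpow_add ht, ← mul_assoc, ← Real.rpow_add ht]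
      ring_nf
    rw [mul_assoc, e]
    have h1 : t ^ ((n:ℝ)/(q:ℝ) - 1) ≤ t ^ (-θ) := hmono _ _ (by linarith)
    calc ν * (t ^ (-(n:ℝ)/(q:ℝ)) * t ^ ((n:ℝ)/(q:ℝ) - 1) * w)
        ≤ ν * (t ^ (-(n:ℝ)/(q:ℝ)) * t ^ (-θ) * K) := by
          apply mul_le_mul_of_nonneg_left _ hν.le
          apply mul_le_mul (mul_le_mul_of_nonneg_left h1 htβ.le) hw hw0 (by positivity)
    _ = t ^ (-(n:ℝ)/(q:ℝ)) * (t^(-θ) * (ν * K)) := by ring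
  -- term 2
  have hterm2 : t^ν * |ρ t| ≤ t ^ (-(n:ℝ)/(q:ℝ)) * (t^(-θ) * (M*((K:ℝ)^s + K)*(K+1))) := by
    have h2 : t^ν * |ρ t| ≤ t ^ (-(n:ℝ)/(q:ℝ)) * (M * (w^s + w) * (v t + t ^ (-(1:ℝ)/(q:ℝ)))) := by
      have := mul_le_mul_of_nonneg_left hρ (Real.rpow_nonneg ht.le ν)
      refine le_trans this (le_of_eq ?_)
      linear_combination (M * (v t + t ^ (-(1:ℝ)/(q:ℝ)))) * hI1
        + (M * (v t + t ^ (-(1:ℝ)/(q:ℝ)))) * hI2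
    refine le_trans h2 ?_
    apply mul_le_mul_of_nonneg_left _ htβ.le
    have hws : w^s ≤ K^s := pow_le_pow_left₀ hw0 hw s
    have hvK : v t ≤ K * t^(-θ) := by
      have e : v t = t^(-ν) * w := by
        rw [hwdef, ← mul_assoc, ← Real.rpow_add ht]
        norm_num
      rw [e]
      calc t^(-ν) * w ≤ t^(-θ) * K :=
        mul_le_mul (hmono _ _ (by linarith)) hw hw0 htθ.le
      _ = K * t^(-θ) := by ring
    have htq : t ^ (-(1:ℝ)/(q:ℝ)) ≤ t^(-θ) := by
      apply hmono
      rw [neg_div]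
      linarith
    calc M * (w^s + w) * (v t + t ^ (-(1:ℝ)/(q:ℝ)))
        ≤ M * ((K:ℝ)^s + K) * ((K+1) * t^(-θ)) := by
          apply mul_le_mul
          · apply mul_le_mul_of_nonneg_left _ hM.le
            exact add_le_add hws hw
          · calc v t + t ^ (-(1:ℝ)/(q:ℝ)) ≤ K * t^(-θ) + 1 * t^(-θ) :=
              add_le_add hvK (by rw [one_mul]; exact htq)
            _ = (K+1) * t^(-θ) := by ring
          · positivity
          · positivity
    _ = t^(-θ) * (M*((K:ℝ)^s + K)*(K+1)) := by ring
  calc ν * t^(ν-1) * v t + t^ν * |ρ t|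
      ≤ t ^ (-(n:ℝ)/(q:ℝ)) * (t^(-θ) * (ν * K))
        + t ^ (-(n:ℝ)/(q:ℝ)) * (t^(-θ) * (M*((K:ℝ)^s + K)*(K+1))) := add_le_add hterm1 hterm2
  _ = t ^ (-(n:ℝ)/(q:ℝ)) * (C * t^(-θ)) := by rw [hC]; ring

lemma solution_deriv (q m n s : ℕ) (γ lam d0 t0 M ν K C θ t1 : ℝ)
    (hq : 0 < q) (hν : 0 < ν)
    (hrel : ν * ((s:ℝ) - 1) = ((n:ℝ) - (m:ℝ)) / (q:ℝ))
    (hθν : θ ≤ ν) (hθ1 : θ ≤ 1 - (n:ℝ)/(q:ℝ)) (hθq : θ ≤ 1/(q:ℝ))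
    (hM : 0 < M) (hK : 0 < K)
    (hC : C = ν*K + M*((K:ℝ)^s + K)*(K+1))
    (ht1t0 : t0 ≤ t1) (h1t1 : 1 ≤ t1)
    (v : ℝ → ℝ) (hadm : IsAdmissible q m n s γ lam d0 t0 M v) :
    ∃ D : ℝ → ℝ,
      (∀ t ≥ t1, HasDerivAt (fun u => u^ν * v u) (D t) t) ∧
      (∀ t ≥ t1, 0 ≤ t^ν * v t) ∧
      (∀ t ≥ t1, t^ν * v t ≤ K →
        |D t - t ^ (-(n:ℝ)/(q:ℝ)) * (γ * (t^ν * v t)^s + lam * (t^ν * v t))|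
          ≤ t ^ (-(n:ℝ)/(q:ℝ)) * (C * t^(-θ))) := by
  obtain ⟨hrange, ρ, hρ, hvd⟩ := hadm
  refine ⟨fun t => ν * t^(ν-1) * v t
      + t^ν * (γ * t ^ (-(m:ℝ)/(q:ℝ)) * v t ^ s + lam * t ^ (-(n:ℝ)/(q:ℝ)) * v t + ρ t),
    ?_, ?_, ?_⟩
  · intro t ht
    have htpos : (0:ℝ) < t := lt_of_lt_of_le one_pos (le_trans h1t1 ht)
    have h1 : HasDerivAt (fun u : ℝ => u^ν) (ν * t^(ν-1)) t :=
      Real.hasDerivAt_rpow_const (Or.inl htpos.ne')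
    exact h1.mul (hvd t (le_trans ht1t0 ht))
  · intro t ht
    have htpos : (0:ℝ) < t := lt_of_lt_of_le one_pos (le_trans h1t1 ht)
    exact mul_nonneg (Real.rpow_nonneg htpos.le ν) (hrange t (le_trans ht1t0 ht)).1
  · intro t ht hwK
    exact key_estimate q m n s γ lam M ν K C θ hq hν hrel hθν hθ1 hθq hM hK hC v ρ t
      (le_trans h1t1 ht) (hrange t (le_trans ht1t0 ht)).1 (hρ t (le_trans ht1t0 ht)) hwK

set_option maxHeartbeats 2000000 in
/-- if `m < n < q`, `λ > 0` and `γ < 0`, then with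
`ν = (n−m)/(q(s−1))` and `U_c = (λ/|γ|)^{1/(s−1)}` the zero solution is
polynomially stable: `v(t) ≤ K·t^{−ν}`, and solutions with `t1^ν·v(t1)` close
to `U_c` satisfy `t^ν·v(t) → U_c`. -/
theorem polynomial_stability_m_lt_n_lt_q
    (q m n s : ℕ) (hq : 0 < q) (hm : 0 < m) (hmn : m < n) (hnq : n < q) (hs : 2 ≤ s)
    (γ lam d0 t0 M : ℝ) (hγ : γ < 0) (hlam : 0 < lam)
    (hd0 : 0 < d0) (ht0 : 0 < t0) (hM : 0 < M) :
    ∀ ν Uc : ℝ, ν = ((n:ℝ) - (m:ℝ)) / ((q:ℝ) * ((s:ℝ) - 1)) →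
      Uc = (lam / |γ|) ^ (1 / ((s:ℝ) - 1)) →
    ∃ δ > 0, ∃ t1 ≥ t0, ∃ K > 0,
      (∀ v : ℝ → ℝ, IsAdmissible q m n s γ lam d0 t0 M v → v t1 ≤ δ →
        ∀ t ≥ t1, v t ≤ K * t ^ (-ν)) ∧
      (∃ δ' > 0, ∀ v : ℝ → ℝ, IsAdmissible q m n s γ lam d0 t0 M v →
        |t1 ^ ν * v t1 - Uc| ≤ δ' →
        Filter.Tendsto (fun t => t ^ ν * v t) Filter.atTop (nhds Uc)) := by
  intro ν Uc hν hUc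
  -- basic positivity and cast facts
  have hγ0 : (0:ℝ) < |γ| := abs_pos.mpr hγ.ne
  have hγ' : |γ| = -γ := abs_of_neg hγ
  have hs1 : (0:ℝ) < (s:ℝ) - 1 := by
    have : (2:ℝ) ≤ (s:ℝ) := by exact_mod_cast hs
    linarith
  have hq' : (0:ℝ) < (q:ℝ) := by exact_mod_cast hq
  have hnm : (0:ℝ) < (n:ℝ) - (m:ℝ) := by
    have : (m:ℝ) < (n:ℝ) := by exact_mod_cast hmn
    linarith
  have hνpos : 0 < ν := by rw [hν]; positivity
  have hrel : ν * ((s:ℝ) - 1) = ((n:ℝ) - (m:ℝ)) / (q:ℝ) := by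
    rw [hν]; field_simp
  have hβ1 : (n:ℝ)/(q:ℝ) < 1 := by
    rw [div_lt_one hq']; exact_mod_cast hnq
  -- power identity
  have hpow : ∀ y : ℝ, 0 < y → (y ^ (1/((s:ℝ)-1))) ^ (s-1 : ℕ) = y := by
    intro y hy
    rw [← Real.rpow_natCast (y ^ (1/((s:ℝ)-1))) (s-1), ← Real.rpow_mul hy.le]
    rw [Nat.cast_sub (by omega : 1 ≤ s), Nat.cast_one]
    rw [one_div_mul_cancel hs1.ne', Real.rpow_one]
  have hUc0 : 0 < Uc := by rw [hUc]; positivity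
  have hUcpow : Uc ^ (s-1:ℕ) = lam/|γ| := by rw [hUc]; exact hpow _ (by positivity)
  have hgUc : lam + γ * Uc^(s-1:ℕ) = 0 := by
    rw [hUcpow, hγ']
    field_simp [hγ.ne]
    ring
  have hfact : ∀ x:ℝ, γ * x^s + lam * x = x * (lam + γ * x^(s-1:ℕ)) := by
    intro x
    have h : x^s = x^(s-1:ℕ) * x := by
      conv_lhs => rw [show s = (s-1)+1 by omega, pow_succ]
    rw [h]; ring
  -- the constant K
  set P : ℝ := (2*lam/|γ|) ^ (1/((s:ℝ)-1)) with hPdef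
  have hPpos : 0 < P := by rw [hPdef]; positivity
  set K : ℝ := Uc + P + 1 with hKdef
  have hK : 0 < K := by positivity
  have hPUc : Uc ≤ P := by
    rw [hUc, hPdef]
    apply Real.rpow_le_rpow (by positivity) _ (by positivity)
    gcongr
    linarith
  have hKUc : Uc + Uc/2 ≤ K := by rw [hKdef]; linarith
  have hPpow : P ^ (s-1:ℕ) = 2*lam/|γ| := hpow _ (by positivity)
  have hgK : γ*K^s + lam*K ≤ -(lam*K) := by
    rw [hfact]
    have h1 : P^(s-1:ℕ) ≤ K^(s-1:ℕ) := pow_le_pow_left₀ hPpos.le (by rw [hKdef]; linarith) _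
    have h2 : γ * K^(s-1:ℕ) ≤ γ * P^(s-1:ℕ) := mul_le_mul_of_nonpos_left h1 hγ.le
    have h3 : γ * P^(s-1:ℕ) = -(2*lam) := by
      rw [hPpow, hγ']
      field_simp [hγ.ne]
    have h4 : lam + γ * K^(s-1:ℕ) ≤ -lam := by rw [h3] at h2; linarith
    calc K * (lam + γ * K^(s-1:ℕ)) ≤ K * (-lam) :=
      mul_le_mul_of_nonneg_left h4 hK.le
    _ = -(lam*K) := by ring
  -- upper g-estimates
  have hc2pos : ∀ ε : ℝ, 0 < ε → 0 < -((Uc+ε) * (lam + γ*(Uc+ε)^(s-1:ℕ))) := by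
    intro ε hε
    have h1 : Uc^(s-1:ℕ) < (Uc+ε)^(s-1:ℕ) :=
      pow_lt_pow_left₀ (by linarith) hUc0.le (by omega)
    have h2 : γ * (Uc+ε)^(s-1:ℕ) < γ * Uc^(s-1:ℕ) := mul_lt_mul_of_neg_left h1 hγ
    have h3 : lam + γ*(Uc+ε)^(s-1:ℕ) < 0 := by linarith
    have h5 : 0 < (Uc+ε) * (-(lam + γ*(Uc+ε)^(s-1:ℕ))) := mul_pos (by linarith) (by linarith)
    linarith [h5]
  have hc2bnd : ∀ ε : ℝ, 0 < ε → ∀ x, Uc + ε ≤ x →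
      γ*x^s + lam*x ≤ (Uc+ε) * (lam + γ*(Uc+ε)^(s-1:ℕ)) := by
    intro ε hε x hx
    rw [hfact]
    have hx0 : (0:ℝ) ≤ x := by linarith
    have h1 : (Uc+ε)^(s-1:ℕ) ≤ x^(s-1:ℕ) := pow_le_pow_left₀ (by linarith) hx _
    have h2 : lam + γ * x^(s-1:ℕ) ≤ lam + γ*(Uc+ε)^(s-1:ℕ) := by
      linarith [mul_le_mul_of_nonpos_left h1 hγ.le]
    have h3 : Uc^(s-1:ℕ) < (Uc+ε)^(s-1:ℕ) :=
      pow_lt_pow_left₀ (by linarith) hUc0.le (by omega)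
    have h4 : lam + γ*(Uc+ε)^(s-1:ℕ) ≤ 0 := by linarith [mul_lt_mul_of_neg_left h3 hγ]
    calc x * (lam + γ * x^(s-1:ℕ)) ≤ x * (lam + γ*(Uc+ε)^(s-1:ℕ)) :=
      mul_le_mul_of_nonneg_left h2 hx0
    _ ≤ (Uc+ε) * (lam + γ*(Uc+ε)^(s-1:ℕ)) := mul_le_mul_of_nonpos_right hx h4
  -- lower g-estimates
  have hc3pos : ∀ ε : ℝ, 0 < ε → ε ≤ Uc/2 → 0 < (Uc/2) * (lam + γ*(Uc-ε)^(s-1:ℕ)) := by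
    intro ε hε hε2
    have h1 : (Uc-ε)^(s-1:ℕ) < Uc^(s-1:ℕ) :=
      pow_lt_pow_left₀ (by linarith) (by linarith) (by omega)
    have h2 : γ * Uc^(s-1:ℕ) < γ * (Uc-ε)^(s-1:ℕ) := mul_lt_mul_of_neg_left h1 hγ
    have h5 : 0 < lam + γ*(Uc-ε)^(s-1:ℕ) := by linarith
    positivity
  have hc3bnd : ∀ ε : ℝ, 0 < ε → ε ≤ Uc/2 → ∀ x, Uc/2 ≤ x → x ≤ Uc - ε →
      (Uc/2) * (lam + γ*(Uc-ε)^(s-1:ℕ)) ≤ γ*x^s + lam*x := by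
    intro ε hε hε2 x hx1 hx2
    rw [hfact]
    have hx0 : (0:ℝ) ≤ x := by linarith
    have h1 : x^(s-1:ℕ) ≤ (Uc-ε)^(s-1:ℕ) := pow_le_pow_left₀ hx0 hx2 _
    have h2 : lam + γ*(Uc-ε)^(s-1:ℕ) ≤ lam + γ * x^(s-1:ℕ) := by
      linarith [mul_le_mul_of_nonpos_left h1 hγ.le]
    have h3 : (Uc-ε)^(s-1:ℕ) < Uc^(s-1:ℕ) :=
      pow_lt_pow_left₀ (by linarith) (by linarith) (by omega)
    have h4 : 0 ≤ lam + γ*(Uc-ε)^(s-1:ℕ) := by linarith [mul_lt_mul_of_neg_left h3 hγ]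
    calc (Uc/2) * (lam + γ*(Uc-ε)^(s-1:ℕ)) ≤ x * (lam + γ*(Uc-ε)^(s-1:ℕ)) :=
      mul_le_mul_of_nonneg_right hx1 h4
    _ ≤ x * (lam + γ * x^(s-1:ℕ)) := mul_le_mul_of_nonneg_left h2 hx0
  -- θ and C
  set θ : ℝ := min (min (1 - (n:ℝ)/(q:ℝ)) ν) (1/(q:ℝ)) with hθdef
  have hθpos : 0 < θ := lt_min (lt_min (by linarith) hνpos) (by positivity)
  have hθν : θ ≤ ν := le_trans (min_le_left _ _) (min_le_right _ _)
  have hθ1 : θ ≤ 1 - (n:ℝ)/(q:ℝ) := le_trans (min_le_left _ _) (min_le_left _ _)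
  have hθq : θ ≤ 1/(q:ℝ) := min_le_right _ _
  set C : ℝ := ν*K + M*((K:ℝ)^s + K)*(K+1) with hCdef
  have hsmall : ∀ η : ℝ, 0 < η → ∃ T : ℝ, ∀ t ≥ T, C * t^(-θ) < η := by
    intro η hη
    have htend : Filter.Tendsto (fun t:ℝ => C * t^(-θ)) Filter.atTop (nhds 0) := by
      have := (tendsto_rpow_neg_atTop hθpos).const_mul C
      simpa using this
    have hev : ∀ᶠ t in Filter.atTop, C * t^(-θ) < η :=
      htend.eventually (gt_mem_nhds hη)
    exact Filter.eventually_atTop.mp hev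
  -- choose t1
  set c2' : ℝ := -((Uc+Uc/2) * (lam + γ*(Uc+Uc/2)^(s-1:ℕ))) with hc2'def
  set c3' : ℝ := (Uc/2) * (lam + γ*(Uc-Uc/2)^(s-1:ℕ)) with hc3'def
  have hc2'p : 0 < c2' := hc2pos _ (by linarith)
  have hc3'p : 0 < c3' := hc3pos _ (by linarith) le_rfl
  obtain ⟨T1, hT1⟩ := hsmall (min (lam*K) (min c2' c3')) (by positivity)
  set t1 : ℝ := max (max t0 1) T1 with ht1def
  have ht1t0 : t0 ≤ t1 := le_trans (le_max_left _ _) (le_max_left _ _)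
  have h1t1 : (1:ℝ) ≤ t1 := le_trans (le_max_right _ _) (le_max_left _ _)
  have ht1T1 : T1 ≤ t1 := le_max_right _ _
  have ht1pos : (0:ℝ) < t1 := lt_of_lt_of_le one_pos h1t1
  refine ⟨K * t1^(-ν), by positivity, t1, ht1t0, K, hK, ?_, ?_⟩
  · -- Part 1: polynomial bound
    intro v hadm hδ t ht
    obtain ⟨D, hD, hw0, hest⟩ := solution_deriv q m n s γ lam d0 t0 M ν K C θ t1
      hq hνpos hrel hθν hθ1 hθq hM hK hCdef ht1t0 h1t1 v hadm
    have hwt1 : t1^ν * v t1 ≤ K := by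
      have h1 : t1^ν * v t1 ≤ t1^ν * (K * t1^(-ν)) :=
        mul_le_mul_of_nonneg_left hδ (Real.rpow_nonneg ht1pos.le ν)
      have h2 : t1^ν * (K * t1^(-ν)) = K := by
        rw [mul_comm K, ← mul_assoc, ← Real.rpow_add ht1pos]
        norm_num
      linarith
    have hbarK : ∀ u ≥ t1, u^ν * v u ≤ K := by
      apply barrier_upper hD hwt1
      intro u hu he
      have he' : u^ν * v u = K := he
      have hupos : (0:ℝ) < u := lt_of_lt_of_le ht1pos hu
      have hb : (0:ℝ) < u ^ (-(n:ℝ)/(q:ℝ)) := Real.rpow_pos_of_pos hupos _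
      have he2 := hest u hu (le_of_eq he')
      rw [he'] at he2
      have h3 := (abs_le.mp he2).2
      have h4 : C * u^(-θ) < lam * K := lt_of_lt_of_le (hT1 u (le_trans ht1T1 hu)) (min_le_left _ _)
      linarith [mul_le_mul_of_nonneg_left hgK hb.le, mul_lt_mul_of_pos_left h4 hb]
    have hwle := hbarK t ht
    have htpos : (0:ℝ) < t := lt_of_lt_of_le ht1pos ht
    have h5 : t^(-ν) * (t^ν * v t) ≤ t^(-ν) * K :=
      mul_le_mul_of_nonneg_left hwle (Real.rpow_nonneg htpos.le _)
    have h6 : t^(-ν) * (t^ν * v t) = v t := by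
      rw [← mul_assoc, ← Real.rpow_add htpos]
      norm_num
    rw [h6] at h5
    linarith [h5]
  · -- Part 2: convergence to Uc
    refine ⟨Uc/2, by positivity, ?_⟩
    intro v hadm hclose
    obtain ⟨D, hD, hw0, hest⟩ := solution_deriv q m n s γ lam d0 t0 M ν K C θ t1
      hq hνpos hrel hθν hθ1 hθq hM hK hCdef ht1t0 h1t1 v hadm
    have hband := abs_le.mp hclose
    have hup : ∀ u ≥ t1, u^ν * v u ≤ Uc + Uc/2 := by
      apply barrier_upper hD (by linarith [hband.2])
      intro u hu he
      have he' : u^ν * v u = Uc + Uc/2 := he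
      have hupos : (0:ℝ) < u := lt_of_lt_of_le ht1pos hu
      have hb : (0:ℝ) < u ^ (-(n:ℝ)/(q:ℝ)) := Real.rpow_pos_of_pos hupos _
      have he2 := hest u hu (by rw [he']; exact hKUc)
      rw [he'] at he2
      have h3 := (abs_le.mp he2).2
      have hg2 : γ*(Uc+Uc/2)^s + lam*(Uc+Uc/2) ≤ -c2' := by
        rw [hc2'def, neg_neg]
        exact hc2bnd (Uc/2) (by linarith) _ le_rfl
      have h4 : C * u^(-θ) < c2' :=
        lt_of_lt_of_le (hT1 u (le_trans ht1T1 hu)) (le_trans (min_le_right _ _) (min_le_left _ _))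
      linarith [mul_le_mul_of_nonneg_left hg2 hb.le, mul_lt_mul_of_pos_left h4 hb]
    have hlo : ∀ u ≥ t1, Uc/2 ≤ u^ν * v u := by
      apply barrier_lower hD (by linarith [hband.1])
      intro u hu he
      have he' : u^ν * v u = Uc/2 := he
      have hupos : (0:ℝ) < u := lt_of_lt_of_le ht1pos hu
      have hb : (0:ℝ) < u ^ (-(n:ℝ)/(q:ℝ)) := Real.rpow_pos_of_pos hupos _
      have he2 := hest u hu (by rw [he']; linarith)
      rw [he'] at he2
      have h3 := (abs_le.mp he2).1
      have hg3 : c3' ≤ γ*(Uc/2)^s + lam*(Uc/2) := by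
        rw [hc3'def]
        exact hc3bnd (Uc/2) (by linarith) le_rfl (Uc/2) le_rfl (by linarith)
      have h4 : C * u^(-θ) < c3' :=
        lt_of_lt_of_le (hT1 u (le_trans ht1T1 hu)) (le_trans (min_le_right _ _) (min_le_right _ _))
      linarith [mul_le_mul_of_nonneg_left hg3 hb.le, mul_lt_mul_of_pos_left h4 hb]
    rw [Metric.tendsto_atTop]
    intro ε hε
    set ε' : ℝ := min (ε/2) (Uc/2) with hε'def
    have hε'pos : 0 < ε' := lt_min (by linarith) (by linarith)
    have hε'2 : ε' ≤ Uc/2 := min_le_right _ _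
    have hε'ε : ε' < ε := lt_of_le_of_lt (min_le_left _ _) (by linarith)
    set c2 : ℝ := -((Uc+ε') * (lam + γ*(Uc+ε')^(s-1:ℕ))) with hc2def
    set c3 : ℝ := (Uc/2) * (lam + γ*(Uc-ε')^(s-1:ℕ)) with hc3def
    have hc2p : 0 < c2 := hc2pos _ hε'pos
    have hc3p : 0 < c3 := hc3pos _ hε'pos hε'2
    obtain ⟨T2', hT2'⟩ := hsmall (min c2 c3 / 2) (by positivity)
    set T2 : ℝ := max t1 T2' with hT2def
    have hT2t1 : t1 ≤ T2 := le_max_left _ _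
    have hT2pos : (0:ℝ) < T2 := lt_of_lt_of_le ht1pos hT2t1
    have hDup : ∀ u, T2 ≤ u → Uc + ε' ≤ u^ν * v u →
        D u ≤ -((min c2 c3 / 2) * u ^ (-((n:ℝ)/(q:ℝ)))) := by
      intro u hu hge
      have hu1 : t1 ≤ u := le_trans hT2t1 hu
      have hupos : (0:ℝ) < u := lt_of_lt_of_le ht1pos hu1
      have hb : (0:ℝ) < u ^ (-(n:ℝ)/(q:ℝ)) := Real.rpow_pos_of_pos hupos _
      have hwK : u^ν * v u ≤ K := le_trans (hup u hu1) hKUc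
      have he2 := hest u hu1 hwK
      have h3 := (abs_le.mp he2).2
      have hg : γ*(u^ν*v u)^s + lam*(u^ν*v u) ≤ -c2 := by
        rw [hc2def, neg_neg]
        exact hc2bnd ε' hε'pos _ hge
      have h4 : C * u^(-θ) < min c2 c3 / 2 := hT2' u (le_trans (le_max_right _ _) hu)
      have h5 : -c2 ≤ -(min c2 c3) := neg_le_neg (min_le_left _ _)
      have hrw : u ^ (-((n:ℝ)/(q:ℝ))) = u ^ (-(n:ℝ)/(q:ℝ)) := by rw [neg_div]
      rw [hrw]
      linarith [mul_le_mul_of_nonneg_left hg hb.le, mul_lt_mul_of_pos_left h4 hb,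
        mul_le_mul_of_nonneg_left h5 hb.le]
    have hDlo : ∀ u, T2 ≤ u → u^ν * v u ≤ Uc - ε' →
        (min c2 c3 / 2) * u ^ (-((n:ℝ)/(q:ℝ))) ≤ D u := by
      intro u hu hle
      have hu1 : t1 ≤ u := le_trans hT2t1 hu
      have hupos : (0:ℝ) < u := lt_of_lt_of_le ht1pos hu1
      have hb : (0:ℝ) < u ^ (-(n:ℝ)/(q:ℝ)) := Real.rpow_pos_of_pos hupos _
      have hwK : u^ν * v u ≤ K := le_trans (hup u hu1) hKUc
      have he2 := hest u hu1 hwK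
      have h3 := (abs_le.mp he2).1
      have hg : c3 ≤ γ*(u^ν*v u)^s + lam*(u^ν*v u) := by
        rw [hc3def]
        exact hc3bnd ε' hε'pos hε'2 _ (hlo u hu1) hle
      have h4 : C * u^(-θ) < min c2 c3 / 2 := hT2' u (le_trans (le_max_right _ _) hu)
      have h5 : min c2 c3 ≤ c3 := min_le_right _ _
      have hrw : u ^ (-((n:ℝ)/(q:ℝ))) = u ^ (-(n:ℝ)/(q:ℝ)) := by rw [neg_div]
      rw [hrw]
      linarith [mul_le_mul_of_nonneg_left hg hb.le, mul_lt_mul_of_pos_left h4 hb,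
        mul_le_mul_of_nonneg_left h5 hb.le]
    have hex2 : ∃ t2, T2 ≤ t2 ∧ t2^ν * v t2 ≤ Uc + ε' := by
      by_contra hcon
      push_neg at hcon
      exact escape (β := (n:ℝ)/(q:ℝ)) hβ1
        (show (0:ℝ) < min c2 c3 / 2 by positivity) hT2pos
        (fun u hu => hD u (le_trans hT2t1 hu))
        (fun u hu => hDup u hu (le_of_lt (hcon u hu)))
        (fun u hu => hw0 u (le_trans hT2t1 hu))
    obtain ⟨t2, ht2T2, ht2w⟩ := hex2
    have hafter2 : ∀ u ≥ t2, u^ν * v u ≤ Uc + ε' := by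
      apply barrier_upper (fun u hu => hD u (le_trans (le_trans hT2t1 ht2T2) hu)) ht2w
      intro u hu he
      have he' : u^ν * v u = Uc + ε' := he
      have huT2 : T2 ≤ u := le_trans ht2T2 hu
      have hDu := hDup u huT2 (le_of_eq he'.symm)
      have hupos : (0:ℝ) < u := lt_of_lt_of_le hT2pos huT2
      have hb : (0:ℝ) < min c2 c3 / 2 * u ^ (-((n:ℝ)/(q:ℝ))) := by positivity
      linarith
    have hex3 : ∃ t3, T2 ≤ t3 ∧ Uc - ε' ≤ t3^ν * v t3 := by
      by_contra hcon
      push_neg at hcon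
      refine escape (w := fun u => -(u^ν * v u)) (D := fun u => -(D u)) (L := -(Uc+Uc/2))
        (β := (n:ℝ)/(q:ℝ)) hβ1 (show (0:ℝ) < min c2 c3 / 2 by positivity) hT2pos
        (fun u hu => (hD u (le_trans hT2t1 hu)).neg) (fun u hu => ?_) (fun u hu => ?_)
      · have := hDlo u hu (le_of_lt (hcon u hu))
        linarith
      · have := hup u (le_trans hT2t1 hu)
        linarith
    obtain ⟨t3, ht3T2, ht3w⟩ := hex3
    have hafter3 : ∀ u ≥ t3, Uc - ε' ≤ u^ν * v u := by
      apply barrier_lower (fun u hu => hD u (le_trans (le_trans hT2t1 ht3T2) hu)) ht3w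
      intro u hu he
      have he' : u^ν * v u = Uc - ε' := he
      have huT2 : T2 ≤ u := le_trans ht3T2 hu
      have hDu := hDlo u huT2 (le_of_eq he')
      have hupos : (0:ℝ) < u := lt_of_lt_of_le hT2pos huT2
      have hb : (0:ℝ) < min c2 c3 / 2 * u ^ (-((n:ℝ)/(q:ℝ))) := by positivity
      linarith
    refine ⟨max t2 t3, ?_⟩
    intro u hu
    have h2 := hafter2 u (le_trans (le_max_left _ _) hu)
    have h3 := hafter3 u (le_trans (le_max_right _ _) hu)
    simp only [Real.dist_eq]
    have habs : |u^ν * v u - Uc| ≤ ε' := abs_le.mpr ⟨by linarith, by linarith⟩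
    calc |u^ν * v u - Uc| ≤ ε' := habs
    _ < ε := hε'ε
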